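/- Let n ≥ 2 be an integer. The quotient group C(𝕋ⁿ,𝕋ⁿ)/N of the group of continuous maps 𝕋ⁿ → 𝕋ⁿ by the normal subgroup N of null-homotopic maps is generated by the set of cosets {[x₀] : x₀ ∈ C(𝕋ⁿ,𝕋ⁿ), x₀ is not surjective}. -/

import Mathlib

open ContinuousMap

section NullHomotopic

variable {V G : Type*} [TopologicalSpace V] [TopologicalSpace G] [Group G] [IsTopologicalGroup G]

theorem ContinuousMap.Homotopic.mul' {x x' y y' : C(V, G)} (hx : x.Homotopic x')
    (hy : y.Homotopic y') : (x * y).Homotopic (x' * y') := by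
  obtain ⟨F⟩ := hx
  obtain ⟨K⟩ := hy
  exact ⟨{ toFun := fun p => F p * K p
           continuous_toFun := F.continuous.mul K.continuous
           map_zero_left := fun v => by simp
           map_one_left := fun v => by simp }⟩

theorem ContinuousMap.Homotopic.inv' {x x' : C(V, G)} (hx : x.Homotopic x') :
    x⁻¹.Homotopic x'⁻¹ := by
  obtain ⟨F⟩ := hx
  exact ⟨{ toFun := fun p => (F p)⁻¹
           continuous_toFun := F.continuous.inv
           map_zero_left := fun v => by simp
           map_one_left := fun v => by simp }⟩

/-- The normal subgroup of null-homotopic maps in `C(V,G)`. -/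
def nullHomotopicSubgroup (V G : Type*) [TopologicalSpace V] [TopologicalSpace G] [Group G]
    [IsTopologicalGroup G] : Subgroup C(V, G) where
  carrier := {x : C(V, G) | x.Homotopic 1}
  one_mem' := ContinuousMap.Homotopic.refl 1
  mul_mem' := fun hx hy => by simpa using hx.mul' hy
  inv_mem' := fun hx => by simpa using hx.inv'

instance nullHomotopicSubgroup_normal : (nullHomotopicSubgroup V G).Normal := by
  constructor
  intro y hy x
  have h2 : (x * y * x⁻¹).Homotopic (x * 1 * x⁻¹) :=
    ((ContinuousMap.Homotopic.refl x).mul' hy).mul' (ContinuousMap.Homotopic.refl x⁻¹)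
  exact (by simpa using h2 : (x * y * x⁻¹).Homotopic 1)

end NullHomotopic

/-- For `n ≥ 2`, the quotient of `C(𝕋ⁿ,𝕋ⁿ)` by the normal subgroup of
null-homotopic maps is generated by the cosets of the non-surjective maps. -/
theorem torus_quotient_generated_by_nonsurjective {n : ℕ} (hn : 2 ≤ n) :
    Subgroup.closure
      ((fun x₀ : C(Fin n → Circle, Fin n → Circle) =>
          (QuotientGroup.mk x₀ :
            C(Fin n → Circle, Fin n → Circle) ⧸ nullHomotopicSubgroup _ _)) ''
        {x₀ : C(Fin n → Circle, Fin n → Circle) | ¬Function.Surjective ⇑x₀}) = ⊤ := by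
  obtain ⟨c, hc⟩ : ∃ c : Circle, c ≠ 1 :=
    ⟨⟨-1, by simp [Submonoid.unitSphere]⟩, fun h => by
      have h := congrArg (fun z : Circle => (z : ℂ)) h; norm_num at h⟩
  rw [eq_top_iff]
  rintro g -
  induction g using QuotientGroup.induction_on with
  | H x =>
    set f : Fin n → C(Fin n → Circle, Fin n → Circle) := fun i =>
      ⟨fun v j => if j = i then x v j else 1, by
        apply continuous_pi
        intro j
        by_cases h : j = i
        · simpa [h, Function.comp_def] using (continuous_apply j).comp x.continuous
        · simpa [h] using continuous_const⟩ with hf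
    have hx : x = ∏ i, f i := by
      ext v j
      simp [hf, ContinuousMap.prod_apply, Finset.prod_apply]
    have hmk : (QuotientGroup.mk x : _ ⧸ nullHomotopicSubgroup _ _) = ∏ i, QuotientGroup.mk (f i) := by
      rw [hx]
      exact map_prod (QuotientGroup.mk' (nullHomotopicSubgroup _ _)) f Finset.univ
    rw [hmk]
    apply Subgroup.prod_mem
    intro i _
    apply Subgroup.subset_closure
    refine ⟨f i, ?_, rfl⟩
    intro hs
    have h2 : 1 < n := hn
    obtain ⟨j, hj⟩ : ∃ j : Fin n, j ≠ i := by
      have : Nontrivial (Fin n) := Fin.nontrivial_iff_two_le.mpr hn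
      exact exists_ne i
    obtain ⟨v, hv⟩ := hs (fun _ => c)
    have := congrFun hv j
    simp [hf, hj] at this
    exact hc this.symm
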